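/- Let 0 < a ≤ 1, 0 < q < 1 and y > 0. The 5×5 real symmetric matrix P with rows (1, q, y^2, q, a^2y^2), (q, q, a^2y^2, q, a^2y^2), (y^2, a^2y^2, y^2, a^2y^2, a^2y^2), (q, q, a^2y^2, q, a^2y^2), (a^2y^2, a^2y^2, a^2y^2, a^2y^2, a^2y^2) is positive semidefinite if and only if both (1−a^2)y^2 ≤ 1−q and a^2 y^2 ≤ q. -/

import Mathlib

theorem fifteenPointTest_P_posSemidef_iff (a q y : ℝ)
    (ha0 : 0 < a) (ha1 : a ≤ 1) (hq0 : 0 < q) (hq1 : q < 1) (hy : 0 < y) :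
    (Matrix.PosSemidef
      !![1, q, y ^ 2, q, a ^ 2 * y ^ 2;
         q, q, a ^ 2 * y ^ 2, q, a ^ 2 * y ^ 2;
         y ^ 2, a ^ 2 * y ^ 2, y ^ 2, a ^ 2 * y ^ 2, a ^ 2 * y ^ 2;
         q, q, a ^ 2 * y ^ 2, q, a ^ 2 * y ^ 2;
         a ^ 2 * y ^ 2, a ^ 2 * y ^ 2, a ^ 2 * y ^ 2, a ^ 2 * y ^ 2, a ^ 2 * y ^ 2])
      ↔ ((1 - a ^ 2) * y ^ 2 ≤ 1 - q ∧ a ^ 2 * y ^ 2 ≤ q) := by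
  rw [Matrix.posSemidef_iff_dotProduct_mulVec]
  constructor
  · rintro ⟨-, h⟩
    constructor
    · have := h ![1, -1, -1, 0, 1]
      simp [dotProduct, Matrix.mulVec, Fin.sum_univ_five, Matrix.vecHead, Matrix.vecTail] at this
      nlinarith [this]
    · have := h ![0, 1, 0, 0, -1]
      simp [dotProduct, Matrix.mulVec, Fin.sum_univ_five, Matrix.vecHead, Matrix.vecTail] at this
      nlinarith [this]
  · rintro ⟨h1, h2⟩
    refine ⟨?_, fun x => ?_⟩
    · ext i j
      fin_cases i <;> fin_cases j <;>
        simp [Matrix.conjTranspose_apply, Matrix.vecHead, Matrix.vecTail]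
    · simp [dotProduct, Matrix.mulVec, Fin.sum_univ_five, Matrix.vecHead, Matrix.vecTail]
      have k1 : (0:ℝ) ≤ a ^ 2 * y ^ 2 * (x 0 + x 1 + x 2 + x 3 + x 4) ^ 2 :=
        mul_nonneg (mul_nonneg (sq_nonneg a) (sq_nonneg y)) (sq_nonneg _)
      have k2 : (0:ℝ) ≤ (q - a ^ 2 * y ^ 2) * (x 0 + x 1 + x 3) ^ 2 :=
        mul_nonneg (by linarith) (sq_nonneg _)
      have k3 : (0:ℝ) ≤ (1 - a ^ 2) * y ^ 2 * (x 0 + x 2) ^ 2 :=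
        mul_nonneg (mul_nonneg (by nlinarith) (sq_nonneg y)) (sq_nonneg _)
      have k4 : (0:ℝ) ≤ (1 - q - (1 - a ^ 2) * y ^ 2) * (x 0) ^ 2 :=
        mul_nonneg (by linarith) (sq_nonneg _)
      linarith [k1, k2, k3, k4]
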